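/- In C[S_n\S_{α+n}/S_n], for distinct i, j ≤ α one has (a((i j)) − 1)·θ_j·(θ_i + 1) = 0, where 1 is the unit of the double coset algebra. -/

import Mathlib

open Equiv

noncomputable section

/-- The subgroup `S_n ⊆ S_{α+n}` of permutations fixing `{1,…,α}` pointwise. -/
def fixFirst (α n : ℕ) : Subgroup (Perm (Fin (α + n))) :=
  fixingSubgroup (Perm (Fin (α + n))) {i : Fin (α + n) | (i : ℕ) < α}

/-- The double coset `S_n · t · S_n` in `S_{α+n}`, as a finset. -/
def dcos (α n : ℕ) (t : Perm (Fin (α + n))) : Finset (Perm (Fin (α + n))) :=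
  (Set.toFinite {h | ∃ k₁ ∈ fixFirst α n, ∃ k₂ ∈ fixFirst α n, h = k₁ * t * k₂}).toFinset

/-- `(1/n!)·Σ_{h ∈ S_n t S_n} δ_h` in the group algebra `C[S_{α+n}]`. -/
def dosetElt (α n : ℕ) (t : Perm (Fin (α + n))) : MonoidAlgebra ℂ (Perm (Fin (α + n))) :=
  ((Nat.factorial n : ℂ))⁻¹ • ∑ h ∈ dcos α n t, MonoidAlgebra.single h 1

/-- `θ_i = (1/n!)·Σ_{h ∈ S_n (i,α+1) S_n} δ_h`, where `(i, α+1)` is the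
transposition of `i ≤ α` with `α+1` (0-based: of `i < α` with `α`). -/
def theta (α n : ℕ) (hn : 0 < n) (i : Fin α) : MonoidAlgebra ℂ (Perm (Fin (α + n))) :=
  dosetElt α n (Equiv.swap (Fin.castAdd n i) ⟨α, by omega⟩)

/-- `a(g) = (1/n!)·Σ_{σ ∈ S_n} δ_{gσ}` for `g ∈ S_α ⊆ S_{α+n}`. -/
def aElt (α n : ℕ) (g : Perm (Fin α)) : MonoidAlgebra ℂ (Perm (Fin (α + n))) :=
  ((Nat.factorial n : ℂ))⁻¹ • ∑ σ ∈ (Set.toFinite (fixFirst α n : Set (Perm (Fin (α + n))))).toFinset,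
    MonoidAlgebra.single (Perm.viaFintypeEmbedding g (Fin.castAddEmb n) * σ) 1

/-- The unit `(1/n!)·Σ_{k ∈ S_n} δ_k` of the double coset algebra. -/
def unitK (α n : ℕ) : MonoidAlgebra ℂ (Perm (Fin (α + n))) :=
  ((Nat.factorial n : ℂ))⁻¹ • ∑ σ ∈ (Set.toFinite (fixFirst α n : Set (Perm (Fin (α + n))))).toFinset,
    MonoidAlgebra.single σ 1

end

namespace RelFiveAux

open Finset MonoidAlgebra

variable {α n : ℕ}

lemma mem_fixFirst {σ : Perm (Fin (α + n))} :
    σ ∈ fixFirst α n ↔ ∀ x : Fin (α + n), (x : ℕ) < α → σ x = x := by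
  constructor
  · intro h x hx
    exact (mem_fixingSubgroup_iff _).1 h x hx
  · intro h
    exact (mem_fixingSubgroup_iff _).2 fun y hy => h y hy

lemma mem_dcos {t h : Perm (Fin (α + n))} :
    h ∈ dcos α n t ↔ ∃ k₁ ∈ fixFirst α n, ∃ k₂ ∈ fixFirst α n, h = k₁ * t * k₂ := by
  rw [dcos, Set.Finite.mem_toFinset, Set.mem_setOf_eq]

lemma fix_map_ge {k : Perm (Fin (α + n))} (hk : k ∈ fixFirst α n) {z : Fin (α + n)}
    (hz : α ≤ (z : ℕ)) : α ≤ ((k z : Fin (α + n)) : ℕ) := by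
  by_contra hlt
  push_neg at hlt
  have h1 : k (k z) = k z := mem_fixFirst.1 hk _ hlt
  have h2 : k z = z := k.injective h1
  rw [h2] at hlt; omega

lemma mem_dcos_swap {y A : Fin (α + n)} (hy : (y : ℕ) < α) (hA : (A : ℕ) = α)
    {h : Perm (Fin (α + n))} :
    h ∈ dcos α n (Equiv.swap y A) ↔
      ((∀ x : Fin (α + n), (x : ℕ) < α → x ≠ y → h x = x) ∧ α ≤ ((h y : Fin (α + n)) : ℕ)) := by
  constructor
  · intro hmem
    obtain ⟨k₁, hk₁, k₂, hk₂, rfl⟩ := mem_dcos.1 hmem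
    constructor
    · intro x hx hxy
      have e2 : k₂ x = x := mem_fixFirst.1 hk₂ x hx
      have eA : x ≠ A := fun hc => by rw [hc, hA] at hx; omega
      simp only [Perm.mul_apply, e2, swap_apply_of_ne_of_ne hxy eA]
      exact mem_fixFirst.1 hk₁ x hx
    · have e2 : k₂ y = y := mem_fixFirst.1 hk₂ y hy
      simp only [Perm.mul_apply, e2, swap_apply_left]
      exact fix_map_ge hk₁ (by omega)
  · rintro ⟨h1, h2⟩
    refine mem_dcos.2 ⟨Equiv.swap A (h y), ?_, Equiv.swap y A * (Equiv.swap A (h y) * h), ?_, ?_⟩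
    · rw [mem_fixFirst]
      intro x hx
      exact swap_apply_of_ne_of_ne (fun hc => by rw [hc, hA] at hx; omega)
        (fun hc => by rw [hc] at hx; omega)
    · rw [mem_fixFirst]
      intro x hx
      by_cases hxy : x = y
      · subst hxy
        simp only [Perm.mul_apply, swap_apply_right, swap_apply_left]
      · have hfix : h x = x := h1 x hx hxy
        have hxA : x ≠ A := fun hc => by rw [hc, hA] at hx; omega
        have hxhy : x ≠ h y := fun hc => by rw [hc] at hx; omega
        have e1 : Equiv.swap A (h y) x = x := swap_apply_of_ne_of_ne hxA hxhy
        have e2 : Equiv.swap y A x = x := swap_apply_of_ne_of_ne hxy hxA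
        simp only [Perm.mul_apply, hfix, e1, e2]
    · ext x
      simp only [Perm.mul_apply, swap_apply_self]

lemma card_subtype_ge : Fintype.card {x : Fin (α + n) // α ≤ (x : ℕ)} = n := by
  let e : {x : Fin (α + n) // α ≤ (x : ℕ)} ≃ Fin n :=
    { toFun := fun x => ⟨(x.1 : ℕ) - α, by have := x.1.isLt; have := x.2; omega⟩
      invFun := fun y => ⟨⟨α + (y : ℕ), by have := y.isLt; omega⟩, by simp⟩
      left_inv := fun x => by
        apply Subtype.ext; apply Fin.ext
        have := x.2
        simp only
        omega
      right_inv := fun y => by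
        apply Fin.ext
        simp only
        omega }
  rw [Fintype.card_congr e, Fintype.card_fin]

lemma card_KFinset :
    ((Set.toFinite (fixFirst α n : Set (Perm (Fin (α + n))))).toFinset).card = n.factorial := by
  classical
  have h1 : (Set.toFinite (fixFirst α n : Set (Perm (Fin (α + n))))).toFinset
      = Finset.univ.filter (fun σ => σ ∈ fixFirst α n) := by
    ext σ
    simp only [Set.Finite.mem_toFinset, SetLike.mem_coe, Finset.mem_filter,
      Finset.mem_univ, true_and]
  rw [h1, ← Fintype.card_subtype]
  have e : {σ : Perm (Fin (α + n)) // σ ∈ fixFirst α n}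
      ≃ Perm {x : Fin (α + n) // α ≤ (x : ℕ)} := by
    refine (Equiv.subtypeEquivRight ?_).trans
      (Equiv.Perm.subtypeEquivSubtypePerm (fun x : Fin (α + n) => α ≤ (x : ℕ))).symm
    intro σ
    rw [mem_fixFirst]
    constructor
    · intro h a ha; exact h a (by omega)
    · intro h a ha; exact h a (by omega)
  rw [Fintype.card_congr e, Fintype.card_perm, card_subtype_ge]

lemma card_prescribed {y m : Fin (α + n)} (hy : (y : ℕ) < α) (hm : α ≤ (m : ℕ)) :
    (Finset.univ.filter fun a : Perm (Fin (α + n)) =>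
      (∀ x : Fin (α + n), (x : ℕ) < α → x ≠ y → a x = x) ∧ a y = m).card = n.factorial := by
  classical
  rw [← card_KFinset (α := α) (n := n)]
  refine Finset.card_nbij' (fun a => Equiv.swap y m * a) (fun k => Equiv.swap y m * k)
    ?_ ?_ ?_ ?_
  · intro a ha
    simp only [Finset.mem_coe, Finset.mem_filter, Finset.mem_univ, true_and] at ha
    rw [Finset.mem_coe, Set.Finite.mem_toFinset, SetLike.mem_coe, mem_fixFirst]
    intro x hx
    by_cases hxy : x = y
    · subst hxy
      rw [Perm.mul_apply, ha.2, swap_apply_right]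
    · rw [Perm.mul_apply, ha.1 x hx hxy,
        swap_apply_of_ne_of_ne hxy (fun hc => by rw [hc] at hx; omega)]
  · intro k hk
    rw [Finset.mem_coe, Set.Finite.mem_toFinset, SetLike.mem_coe, mem_fixFirst] at hk
    simp only [Finset.mem_coe, Finset.mem_filter, Finset.mem_univ, true_and]
    constructor
    · intro x hx hxy
      rw [Perm.mul_apply, hk x hx,
        swap_apply_of_ne_of_ne hxy (fun hc => by rw [hc] at hx; omega)]
    · rw [Perm.mul_apply, hk y hy, swap_apply_left]
  · intro a _
    show Equiv.swap y m * (Equiv.swap y m * a) = a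
    rw [← mul_assoc, swap_mul_self, one_mul]
  · intro k _
    show Equiv.swap y m * (Equiv.swap y m * k) = k
    rw [← mul_assoc, swap_mul_self, one_mul]

section preds

variable (i' j' : Fin (α + n))

/-- the double coset class of `θ_j` -/
def PJ (g : Perm (Fin (α + n))) : Prop :=
  (∀ x : Fin (α + n), (x : ℕ) < α → x ≠ j' → g x = x) ∧ α ≤ ((g j' : Fin (α + n)) : ℕ)

/-- the double coset class of the 3-cycle -/
def PC (g : Perm (Fin (α + n))) : Prop :=
  (∀ x : Fin (α + n), (x : ℕ) < α → x ≠ i' → x ≠ j' → g x = x) ∧ g i' = j'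
    ∧ α ≤ ((g j' : Fin (α + n)) : ℕ)

/-- the double coset class sending both `i'`, `j'` up -/
def PP (g : Perm (Fin (α + n))) : Prop :=
  (∀ x : Fin (α + n), (x : ℕ) < α → x ≠ i' → x ≠ j' → g x = x)
    ∧ α ≤ ((g i' : Fin (α + n)) : ℕ) ∧ α ≤ ((g j' : Fin (α + n)) : ℕ)

end preds

section main

variable {i' j' A : Fin (α + n)} (hi' : (i' : ℕ) < α) (hj' : (j' : ℕ) < α)
  (hne : i' ≠ j') (hA : (A : ℕ) = α)

include hi' hj' hne hA

lemma count_pos {g : Perm (Fin (α + n))} (H : PC i' j' g ∨ PP i' j' g) :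
    (((dcos α n (Equiv.swap j' A)) ×ˢ (dcos α n (Equiv.swap i' A))).filter
      fun p => p.1 * p.2 = g).card = n.factorial := by
  classical
  have hgj : α ≤ ((g j' : Fin (α + n)) : ℕ) := by
    rcases H with H | H
    · exact H.2.2
    · exact H.2.2
  rw [← card_prescribed (y := j') (m := g j') hj' hgj]
  refine Finset.card_nbij' (fun p => p.1) (fun a => (a, a⁻¹ * g)) ?_ ?_ ?_ ?_
  · rintro ⟨a, b⟩ hp
    simp only [Finset.mem_coe, Finset.mem_filter, Finset.mem_product] at hp
    obtain ⟨⟨ha, hb⟩, hprod⟩ := hp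
    rw [mem_dcos_swap hj' hA] at ha
    rw [mem_dcos_swap hi' hA] at hb
    simp only [Finset.mem_coe, Finset.mem_filter, Finset.mem_univ, true_and]
    refine ⟨ha.1, ?_⟩
    have : b j' = j' := hb.1 j' hj' (Ne.symm hne)
    rw [← hprod]
    simp only [Perm.mul_apply, this]
  · intro a ha
    simp only [Finset.mem_coe, Finset.mem_filter, Finset.mem_univ, true_and] at ha
    simp only [Finset.mem_coe, Finset.mem_filter, Finset.mem_product]
    have haDj : a ∈ dcos α n (Equiv.swap j' A) := by
      rw [mem_dcos_swap hj' hA]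
      exact ⟨ha.1, by rw [ha.2]; exact hgj⟩
    have hcom : ∀ x : Fin (α + n), (x : ℕ) < α → x ≠ i' → x ≠ j' → g x = x := by
      rcases H with H | H
      · exact H.1
      · exact H.1
    have hbDi : a⁻¹ * g ∈ dcos α n (Equiv.swap i' A) := by
      rw [mem_dcos_swap hi' hA]
      constructor
      · intro x hx hxi
        by_cases hxj : x = j'
        · subst hxj
          apply a.injective
          rw [Perm.mul_apply, Perm.coe_inv, Equiv.apply_symm_apply, ha.2]
        · apply a.injective
          rw [Perm.mul_apply, Perm.coe_inv, Equiv.apply_symm_apply, hcom x hx hxi hxj, ha.1 x hx hxj]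
      · rcases H with H | H
        · -- g i' = j'
          rw [Perm.mul_apply, H.2.1]
          by_contra hlt
          push_neg at hlt
          by_cases hz : a⁻¹ j' = j'
          · have : a j' = j' := by
              conv_lhs => rw [← hz]
              exact a.apply_symm_apply j'
            rw [ha.2] at this
            rw [this] at hgj
            omega
          · have h3 : a (a⁻¹ j') = a⁻¹ j' := ha.1 _ hlt hz
            have h4 : a (a⁻¹ j') = j' := a.apply_symm_apply j'
            exact hz (h3.symm.trans h4)
        · -- α ≤ g i'
          rw [Perm.mul_apply]
          by_contra hlt
          push_neg at hlt
          by_cases hz : a⁻¹ (g i') = j'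
          · have : a j' = g i' := by
              conv_lhs => rw [← hz]
              exact a.apply_symm_apply _
            rw [ha.2] at this
            exact hne (g.injective this).symm
          · have h3 : a (a⁻¹ (g i')) = a⁻¹ (g i') := ha.1 _ hlt hz
            have h4 : a (a⁻¹ (g i')) = g i' := a.apply_symm_apply _
            rw [h4] at h3
            rw [← h3] at hlt
            have := H.2.1
            omega
    exact ⟨⟨haDj, hbDi⟩, by group⟩
  · rintro ⟨a, b⟩ hp
    simp only [Finset.mem_coe, Finset.mem_filter, Finset.mem_product] at hp
    have : a⁻¹ * g = b := by rw [← hp.2]; group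
    simp [this]
  · intro a _; rfl

lemma count_zero {g : Perm (Fin (α + n))} (H : ¬(PC i' j' g ∨ PP i' j' g)) :
    (((dcos α n (Equiv.swap j' A)) ×ˢ (dcos α n (Equiv.swap i' A))).filter
      fun p => p.1 * p.2 = g).card = 0 := by
  classical
  rw [Finset.card_eq_zero, Finset.filter_eq_empty_iff]
  rintro ⟨a, b⟩ hp heq
  simp only [Finset.mem_product] at hp
  obtain ⟨ha, hb⟩ := hp
  rw [mem_dcos_swap hj' hA] at ha
  rw [mem_dcos_swap hi' hA] at hb
  apply H
  have hcom : ∀ x : Fin (α + n), (x : ℕ) < α → x ≠ i' → x ≠ j' → g x = x := by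
    intro x hx hxi hxj
    rw [← heq, Perm.mul_apply, hb.1 x hx hxi, ha.1 x hx hxj]
  have hgj : α ≤ ((g j' : Fin (α + n)) : ℕ) := by
    rw [← heq, Perm.mul_apply, hb.1 j' hj' (Ne.symm hne)]
    exact ha.2
  have hgi : g i' = a (b i') := by rw [← heq]; rfl
  by_cases hup : α ≤ ((a (b i') : Fin (α + n)) : ℕ)
  · right
    exact ⟨hcom, by rw [hgi]; exact hup, hgj⟩
  · left
    push_neg at hup
    refine ⟨hcom, ?_, hgj⟩
    rw [hgi]
    by_contra hzj
    have h3 : a (a (b i')) = a (b i') := ha.1 _ hup hzj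
    have h4 : a (b i') = b i' := a.injective h3
    rw [h4] at hup
    have := hb.2
    omega

-- translation lemmas for w = swap i' j'
lemma w_ge_iff (z : Fin (α + n)) :
    α ≤ ((Equiv.swap i' j' z : Fin (α + n)) : ℕ) ↔ α ≤ (z : ℕ) := by
  constructor
  · intro h
    by_contra hlt
    push_neg at hlt
    rcases eq_or_ne z i' with rfl | h1
    · rw [swap_apply_left] at h; omega
    rcases eq_or_ne z j' with rfl | h2
    · rw [swap_apply_right] at h; omega
    · rw [swap_apply_of_ne_of_ne h1 h2] at h; omega
  · intro h
    rw [swap_apply_of_ne_of_ne (fun hc => by rw [hc] at h; omega)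
      (fun hc => by rw [hc] at h; omega)]
    exact h

lemma w_fix_ge {z : Fin (α + n)} (hz : α ≤ (z : ℕ)) : Equiv.swap i' j' z = z :=
  swap_apply_of_ne_of_ne (fun hc => by rw [hc] at hz; omega)
    (fun hc => by rw [hc] at hz; omega)

lemma PJ_w (g : Perm (Fin (α + n))) : PJ j' (Equiv.swap i' j' * g) ↔ PC i' j' g := by
  constructor
  · rintro ⟨h1, h2⟩
    refine ⟨?_, ?_, ?_⟩
    · intro x hx hxi hxj
      have := h1 x hx hxj
      rw [Perm.mul_apply] at this
      have h3 := congrArg (Equiv.swap i' j') this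
      rw [swap_apply_self] at h3
      rw [h3]
      exact swap_apply_of_ne_of_ne hxi hxj
    · have := h1 i' hi' hne
      rw [Perm.mul_apply] at this
      have h3 := congrArg (Equiv.swap i' j') this
      rw [swap_apply_self] at h3
      rw [h3]
      exact swap_apply_left i' j'
    · rw [Perm.mul_apply] at h2
      exact (w_ge_iff hi' hj' hne hA _).1 h2
  · rintro ⟨hcom, hgi, hgj⟩
    constructor
    · intro x hx hxj
      rw [Perm.mul_apply]
      by_cases hxi : x = i'
      · subst hxi
        rw [hgi, swap_apply_right]
      · rw [hcom x hx hxi hxj, swap_apply_of_ne_of_ne hxi hxj]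
    · rw [Perm.mul_apply, w_fix_ge hi' hj' hne hA hgj]
      exact hgj

lemma PC_w (g : Perm (Fin (α + n))) : PC i' j' (Equiv.swap i' j' * g) ↔ PJ j' g := by
  constructor
  · rintro ⟨hcom, hgi, hgj⟩
    constructor
    · intro x hx hxj
      by_cases hxi : x = i'
      · rw [hxi]
        rw [Perm.mul_apply] at hgi
        have h3 := congrArg (Equiv.swap i' j') hgi
        rw [swap_apply_self, swap_apply_right] at h3
        exact h3
      · have := hcom x hx hxi hxj
        rw [Perm.mul_apply] at this
        have h3 := congrArg (Equiv.swap i' j') this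
        rw [swap_apply_self] at h3
        rw [h3]
        exact swap_apply_of_ne_of_ne hxi hxj
    · rw [Perm.mul_apply] at hgj
      exact (w_ge_iff hi' hj' hne hA _).1 hgj
  · rintro ⟨h1, h2⟩
    refine ⟨?_, ?_, ?_⟩
    · intro x hx hxi hxj
      rw [Perm.mul_apply, h1 x hx hxj, swap_apply_of_ne_of_ne hxi hxj]
    · rw [Perm.mul_apply, h1 i' hi' hne, swap_apply_left]
    · rw [Perm.mul_apply, w_fix_ge hi' hj' hne hA h2]
      exact h2

lemma PP_w (g : Perm (Fin (α + n))) : PP i' j' (Equiv.swap i' j' * g) ↔ PP i' j' g := by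
  constructor
  · rintro ⟨hcom, h1, h2⟩
    rw [Perm.mul_apply] at h1 h2
    refine ⟨?_, (w_ge_iff hi' hj' hne hA _).1 h1, (w_ge_iff hi' hj' hne hA _).1 h2⟩
    intro x hx hxi hxj
    have := hcom x hx hxi hxj
    rw [Perm.mul_apply] at this
    have h3 := congrArg (Equiv.swap i' j') this
    rw [swap_apply_self] at h3
    rw [h3]
    exact swap_apply_of_ne_of_ne hxi hxj
  · rintro ⟨hcom, h1, h2⟩
    refine ⟨?_, ?_, ?_⟩
    · intro x hx hxi hxj
      rw [Perm.mul_apply, hcom x hx hxi hxj, swap_apply_of_ne_of_ne hxi hxj]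
    · rw [Perm.mul_apply, w_fix_ge hi' hj' hne hA h1]; exact h1
    · rw [Perm.mul_apply, w_fix_ge hi' hj' hne hA h2]; exact h2

-- exclusivity
lemma PJ_not_PC {g : Perm (Fin (α + n))} (h : PJ j' g) : ¬ PC i' j' g := by
  rintro ⟨_, hgi, _⟩
  have := h.1 i' hi' hne
  rw [this] at hgi
  exact hne hgi

lemma PJ_not_PP {g : Perm (Fin (α + n))} (h : PJ j' g) : ¬ PP i' j' g := by
  rintro ⟨_, hgi, _⟩
  have := h.1 i' hi' hne
  rw [this] at hgi
  omega

lemma PC_not_PP {g : Perm (Fin (α + n))} (h : PC i' j' g) : ¬ PP i' j' g := by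
  rintro ⟨_, hgi, _⟩
  have := h.2.1
  rw [this] at hgi
  omega

open Classical in
lemma natkey (g : Perm (Fin (α + n))) :
    (((dcos α n (Equiv.swap j' A)) ×ˢ (dcos α n (Equiv.swap i' A))).filter
        fun p => p.1 * p.2 = Equiv.swap i' j' * g).card
      + n.factorial * (if Equiv.swap i' j' * g ∈ dcos α n (Equiv.swap j' A) then 1 else 0)
    = (((dcos α n (Equiv.swap j' A)) ×ˢ (dcos α n (Equiv.swap i' A))).filter
        fun p => p.1 * p.2 = g).card
      + n.factorial * (if g ∈ dcos α n (Equiv.swap j' A) then 1 else 0) := by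
  have hmem : ∀ h : Perm (Fin (α + n)), h ∈ dcos α n (Equiv.swap j' A) ↔ PJ j' h :=
    fun h => mem_dcos_swap hj' hA
  by_cases hJ : PJ j' g
  · have hnc : ¬ PC i' j' g := PJ_not_PC hi' hj' hne hA hJ
    have hnp : ¬ PP i' j' g := PJ_not_PP hi' hj' hne hA hJ
    rw [count_pos hi' hj' hne hA (Or.inl ((PC_w hi' hj' hne hA g).2 hJ)),
      count_zero hi' hj' hne hA (by rintro (h | h); exact hnc h; exact hnp h)]
    rw [if_pos ((hmem g).2 hJ), if_neg (fun hc => hnc ((PJ_w hi' hj' hne hA g).1 ((hmem _).1 hc)))]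
    ring
  · by_cases hC : PC i' j' g
    · have hnp : ¬ PP i' j' g := PC_not_PP hi' hj' hne hA hC
      rw [count_pos hi' hj' hne hA (Or.inl hC)]
      rw [count_zero hi' hj' hne hA (by
        rintro (h | h)
        · exact hJ ((PC_w hi' hj' hne hA g).1 h)
        · exact hnp ((PP_w hi' hj' hne hA g).1 h))]
      rw [if_pos ((hmem _).2 ((PJ_w hi' hj' hne hA g).2 hC)), if_neg (fun hc => hJ ((hmem g).1 hc))]
      ring
    · by_cases hP : PP i' j' g
      · rw [count_pos hi' hj' hne hA (Or.inr hP),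
          count_pos hi' hj' hne hA (Or.inr ((PP_w hi' hj' hne hA g).2 hP))]
        rw [if_neg (fun hc => hC ((PJ_w hi' hj' hne hA g).1 ((hmem _).1 hc))),
          if_neg (fun hc => hJ ((hmem g).1 hc))]
      · rw [count_zero hi' hj' hne hA (by
          rintro (h | h)
          · exact hJ ((PC_w hi' hj' hne hA g).1 h)
          · exact hP ((PP_w hi' hj' hne hA g).1 h))]
        rw [count_zero hi' hj' hne hA (show ¬(PC i' j' g ∨ PP i' j' g) by
          rintro (h | h)
          · exact hC h
          · exact hP h)]
        rw [if_neg (fun hc => hC ((PJ_w hi' hj' hne hA g).1 ((hmem _).1 hc))),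
          if_neg (fun hc => hJ ((hmem g).1 hc))]

end main

-- algebra lemmas

lemma single_mul_dosetElt {k : Perm (Fin (α + n))} (hk : k ∈ fixFirst α n)
    (t : Perm (Fin (α + n))) :
    MonoidAlgebra.single k (1 : ℂ) * dosetElt α n t = dosetElt α n t := by
  unfold dosetElt
  rw [mul_smul_comm, Finset.mul_sum]
  congr 1
  simp only [MonoidAlgebra.single_mul_single, one_mul]
  refine Finset.sum_nbij' (fun h => k * h) (fun h => k⁻¹ * h) ?_ ?_ ?_ ?_ ?_
  · intro a ha
    obtain ⟨k₁, hk₁, k₂, hk₂, rfl⟩ := mem_dcos.1 ha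
    exact mem_dcos.2 ⟨k * k₁, mul_mem hk hk₁, k₂, hk₂, by group⟩
  · intro a ha
    obtain ⟨k₁, hk₁, k₂, hk₂, rfl⟩ := mem_dcos.1 ha
    exact mem_dcos.2 ⟨k⁻¹ * k₁, mul_mem (inv_mem hk) hk₁, k₂, hk₂, by group⟩
  · intro a _; group
  · intro a _; group
  · intro a _; rfl

lemma dosetElt_mul_single {k : Perm (Fin (α + n))} (hk : k ∈ fixFirst α n)
    (t : Perm (Fin (α + n))) :
    dosetElt α n t * MonoidAlgebra.single k (1 : ℂ) = dosetElt α n t := by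
  unfold dosetElt
  rw [smul_mul_assoc, Finset.sum_mul]
  congr 1
  simp only [MonoidAlgebra.single_mul_single, mul_one]
  refine Finset.sum_nbij' (fun h => h * k) (fun h => h * k⁻¹) ?_ ?_ ?_ ?_ ?_
  · intro a ha
    obtain ⟨k₁, hk₁, k₂, hk₂, rfl⟩ := mem_dcos.1 ha
    exact mem_dcos.2 ⟨k₁, hk₁, k₂ * k, mul_mem hk₂ hk, by group⟩
  · intro a ha
    obtain ⟨k₁, hk₁, k₂, hk₂, rfl⟩ := mem_dcos.1 ha
    exact mem_dcos.2 ⟨k₁, hk₁, k₂ * k⁻¹, mul_mem hk₂ (inv_mem hk), by group⟩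
  · intro a _; group
  · intro a _; group
  · intro a _; rfl

lemma unitK_mul_dosetElt (t : Perm (Fin (α + n))) :
    unitK α n * dosetElt α n t = dosetElt α n t := by
  unfold unitK
  rw [smul_mul_assoc, Finset.sum_mul]
  rw [Finset.sum_congr rfl (fun σ hσ => single_mul_dosetElt
    (by rw [Set.Finite.mem_toFinset, SetLike.mem_coe] at hσ; exact hσ) t)]
  rw [Finset.sum_const, card_KFinset, ← Nat.cast_smul_eq_nsmul ℂ, smul_smul,
    inv_mul_cancel₀ (Nat.cast_ne_zero.2 (Nat.factorial_ne_zero n)), one_smul]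

lemma dosetElt_mul_unitK (t : Perm (Fin (α + n))) :
    dosetElt α n t * unitK α n = dosetElt α n t := by
  unfold unitK
  rw [mul_smul_comm, Finset.mul_sum]
  rw [Finset.sum_congr rfl (fun σ hσ => dosetElt_mul_single
    (by rw [Set.Finite.mem_toFinset, SetLike.mem_coe] at hσ; exact hσ) t)]
  rw [Finset.sum_const, card_KFinset, ← Nat.cast_smul_eq_nsmul ℂ, smul_smul,
    inv_mul_cancel₀ (Nat.cast_ne_zero.2 (Nat.factorial_ne_zero n)), one_smul]

lemma aElt_eq (g : Perm (Fin α)) :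
    aElt α n g = MonoidAlgebra.single (Perm.viaFintypeEmbedding g (Fin.castAddEmb n)) (1 : ℂ)
      * unitK α n := by
  unfold aElt unitK
  rw [mul_smul_comm, Finset.mul_sum]
  simp only [MonoidAlgebra.single_mul_single, one_mul]

lemma via_swap (i j : Fin α) (hn : 0 < n) :
    Perm.viaFintypeEmbedding (Equiv.swap i j) (Fin.castAddEmb n)
      = Equiv.swap (Fin.castAdd n i) (Fin.castAdd n j) := by
  refine Equiv.ext fun x => ?_
  by_cases hx : (x : ℕ) < α
  · have hx' : x = Fin.castAddEmb n ⟨(x : ℕ), hx⟩ := by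
      apply Fin.ext; simp [Fin.castAddEmb]
    rw [hx', Equiv.Perm.viaFintypeEmbedding_apply_image]
    have hemb : ∀ y : Fin α, Fin.castAddEmb n y = Fin.castAdd n y := fun y => rfl
    rcases eq_or_ne (⟨(x : ℕ), hx⟩ : Fin α) i with rfl | h1
    · rw [swap_apply_left, hemb, hemb, swap_apply_left]
    rcases eq_or_ne (⟨(x : ℕ), hx⟩ : Fin α) j with rfl | h2
    · rw [swap_apply_right, hemb, hemb, swap_apply_right]
    · rw [swap_apply_of_ne_of_ne h1 h2, hemb,
        swap_apply_of_ne_of_ne (fun hc => h1 (Fin.castAdd_inj.1 hc))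
          (fun hc => h2 (Fin.castAdd_inj.1 hc))]
  · have hnr : x ∉ Set.range (Fin.castAddEmb n : Fin α ↪ Fin (α + n)) := by
      rintro ⟨y, rfl⟩
      exact hx y.isLt
    rw [Equiv.Perm.viaFintypeEmbedding_apply_notMem_range (Equiv.swap i j) (Fin.castAddEmb n) hnr]
    have e1 : x ≠ Fin.castAdd n i := fun hc => by rw [hc] at hx; exact hx i.isLt
    have e2 : x ≠ Fin.castAdd n j := fun hc => by rw [hc] at hx; exact hx j.isLt
    exact (swap_apply_of_ne_of_ne e1 e2).symm

lemma arith (m : ℕ) (hm : m ≠ 0) (a b a' b' : ℕ) (h : a + m * b = a' + m * b') :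
    ((m : ℂ))⁻¹ * (m : ℂ)⁻¹ * (a : ℂ) + (m : ℂ)⁻¹ * (b : ℂ)
      = (m : ℂ)⁻¹ * (m : ℂ)⁻¹ * (a' : ℂ) + (m : ℂ)⁻¹ * (b' : ℂ) := by
  have hm' : (m : ℂ) ≠ 0 := Nat.cast_ne_zero.2 hm
  have h' : (a : ℂ) + m * b = a' + m * b' := by exact_mod_cast h
  have hc : (m : ℂ)⁻¹ * (m : ℂ)⁻¹ * (m : ℂ) = (m : ℂ)⁻¹ := by
    rw [mul_assoc, inv_mul_cancel₀ hm', mul_one]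
  linear_combination (m : ℂ)⁻¹ * (m : ℂ)⁻¹ * h' - ((b : ℂ) - (b' : ℂ)) * hc

end RelFiveAux

/-- In `C[S_n\S_{α+n}/S_n]`, for distinct `i, j ≤ α` one has
`(a((i j)) − 1)·θ_j·(θ_i + 1) = 0`, where `1` is the unit of the double coset
algebra. -/
theorem rel_five (α n : ℕ) (hn : 0 < n) (i j : Fin α) (hij : i ≠ j) :
    (aElt α n (Equiv.swap i j) - unitK α n) * theta α n hn j *
        (theta α n hn i + unitK α n) = 0 := by
  classical
  open RelFiveAux in
  have hA0 : α < α + n := by omega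
  set A : Fin (α + n) := ⟨α, hA0⟩ with hAdef
  have hA : (A : ℕ) = α := rfl
  set i' : Fin (α + n) := Fin.castAdd n i with hi'def
  set j' : Fin (α + n) := Fin.castAdd n j with hj'def
  have hi' : (i' : ℕ) < α := i.isLt
  have hj' : (j' : ℕ) < α := j.isLt
  have hne : i' ≠ j' := fun hc => hij (Fin.castAdd_inj.1 hc)
  have hθi : theta α n hn i = dosetElt α n (Equiv.swap i' A) := rfl
  have hθj : theta α n hn j = dosetElt α n (Equiv.swap j' A) := rfl
  set Dj := dcos α n (Equiv.swap j' A) with hDj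
  set Di := dcos α n (Equiv.swap i' A) with hDi
  set N : ℂ := (n.factorial : ℂ) with hN
  -- coefficient formula for S = θj θi + θj
  have hrep : theta α n hn j * theta α n hn i + theta α n hn j
      = (N⁻¹ * N⁻¹) • (∑ p ∈ Dj ×ˢ Di, MonoidAlgebra.single (p.1 * p.2) (1 : ℂ))
        + N⁻¹ • (∑ a ∈ Dj, MonoidAlgebra.single a (1 : ℂ)) := by
    rw [hθi, hθj]
    unfold dosetElt
    rw [smul_mul_assoc, mul_smul_comm, smul_smul, Finset.sum_mul_sum]
    congr 2
    rw [Finset.sum_product]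
    exact Finset.sum_congr rfl fun a _ => Finset.sum_congr rfl fun b _ => by
      rw [MonoidAlgebra.single_mul_single, one_mul]
  have coeff : ∀ h : Perm (Fin (α + n)),
      (theta α n hn j * theta α n hn i + theta α n hn j).coeff h
        = N⁻¹ * N⁻¹ * (((Dj ×ˢ Di).filter fun p => p.1 * p.2 = h).card : ℂ)
          + N⁻¹ * (((if h ∈ Dj then 1 else 0) : ℕ) : ℂ) := by
    intro h
    rw [hrep]
    rw [MonoidAlgebra.coeff_add, Finsupp.add_apply, MonoidAlgebra.coeff_smul,
      MonoidAlgebra.coeff_smul, Finsupp.smul_apply, Finsupp.smul_apply,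
      MonoidAlgebra.coeff_sum, MonoidAlgebra.coeff_sum,
      Finset.sum_apply', Finset.sum_apply']
    simp only [MonoidAlgebra.coeff_single, Finsupp.single_apply]
    rw [Finset.sum_boole, Finset.sum_boole]
    have hcard : (Dj.filter (fun a => a = h)).card = if h ∈ Dj then 1 else 0 := by
      rw [Finset.filter_eq']
      split <;> simp
    rw [hcard, smul_eq_mul, smul_eq_mul]
  have key : MonoidAlgebra.single (Equiv.swap i' j') (1 : ℂ)
      * (theta α n hn j * theta α n hn i + theta α n hn j)
      = theta α n hn j * theta α n hn i + theta α n hn j := by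
    refine MonoidAlgebra.ext (Finsupp.ext fun h => ?_)
    rw [MonoidAlgebra.coeff_single_mul_apply, one_mul, Equiv.swap_inv, coeff, coeff]
    exact arith n.factorial (Nat.factorial_ne_zero n) _ _ _ _
      (natkey hi' hj' hne hA h)
  have hw : aElt α n (Equiv.swap i j)
      = MonoidAlgebra.single (Equiv.swap i' j') (1 : ℂ) * unitK α n := by
    rw [aElt_eq, via_swap i j hn]
  have hul : unitK α n * theta α n hn j = theta α n hn j := by
    rw [hθj]; exact unitK_mul_dosetElt _
  have hur : theta α n hn j * unitK α n = theta α n hn j := by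
    rw [hθj]; exact dosetElt_mul_unitK _
  rw [hw]
  have expand : (MonoidAlgebra.single (Equiv.swap i' j') (1 : ℂ) * unitK α n - unitK α n)
        * theta α n hn j * (theta α n hn i + unitK α n)
      = MonoidAlgebra.single (Equiv.swap i' j') (1 : ℂ)
          * ((unitK α n * theta α n hn j) * theta α n hn i
            + (unitK α n * theta α n hn j) * unitK α n)
        - ((unitK α n * theta α n hn j) * theta α n hn i
            + (unitK α n * theta α n hn j) * unitK α n) := by
    noncomm_ring
  rw [expand, hul, hur, key, sub_self]
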